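/- Determinant mutual information is information-monotone: if X' is conditionally independent of W given X (all binary), then |det(d(X',W))| ≤ |det(d(X,W))|; moreover, the inequality is strict whenever det(d(X,W)) ≠ 0 and the conditional probability matrix d(X'|X) is not a permutation matrix. -/

import Mathlib

noncomputable def det2 (f : Bool → Bool → ℝ) : ℝ :=
  f false false * f true true - f false true * f true false

theorem dmi_information_monotone
    (p : Bool → Bool → Bool → ℝ)  -- p u v w = P(X' = u, X = v, W = w)
    (hnn : ∀ u v w, 0 ≤ p u v w)
    (hsum : ∑ u : Bool, ∑ v : Bool, ∑ w : Bool, p u v w = 1)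
    (hX : ∀ v, 0 < ∑ u : Bool, ∑ w : Bool, p u v w)
    (hci : ∀ u v w, p u v w * (∑ u' : Bool, ∑ w' : Bool, p u' v w')
      = (∑ w' : Bool, p u v w') * (∑ u' : Bool, p u' v w)) :
    |det2 (fun u w => ∑ v : Bool, p u v w)| ≤ |det2 (fun v w => ∑ u : Bool, p u v w)| ∧
    ((det2 (fun v w => ∑ u : Bool, p u v w) ≠ 0 ∧
      ¬((∀ u v : Bool, (∑ w : Bool, p u v w) / (∑ u' : Bool, ∑ w' : Bool, p u' v w')
            = if u = v then 1 else 0) ∨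
        (∀ u v : Bool, (∑ w : Bool, p u v w) / (∑ u' : Bool, ∑ w' : Bool, p u' v w')
            = if u = v then 0 else 1))) →
      |det2 (fun u w => ∑ v : Bool, p u v w)| < |det2 (fun v w => ∑ u : Bool, p u v w)|) := by
  classical
  have hq : ∀ v, 0 < ∑ u : Bool, ∑ w : Bool, p u v w := hX
  set A : Bool → Bool → ℝ :=
    fun u v => (∑ w : Bool, p u v w) / (∑ u' : Bool, ∑ w' : Bool, p u' v w') with hA
  have hfac : ∀ u v w, p u v w = A u v * (∑ u' : Bool, p u' v w) := by
    intro u v w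
    have h := hci u v w
    have hq' : (∑ u' : Bool, ∑ w' : Bool, p u' v w') ≠ 0 := (hq v).ne'
    rw [hA]
    simp only
    rw [div_mul_eq_mul_div, eq_div_iff hq']
    exact h
  have hqsplit : ∀ v, (∑ w : Bool, p false v w) + (∑ w : Bool, p true v w)
      = ∑ u : Bool, ∑ w : Bool, p u v w := by
    intro v
    simp only [Fintype.sum_bool]
    ring
  have hcol : ∀ v, A false v + A true v = 1 := by
    intro v
    rw [hA]
    simp only
    rw [← add_div, hqsplit v, div_self (hq v).ne']
  have h0 : ∀ u v, 0 ≤ A u v := by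
    intro u v
    rw [hA]
    exact div_nonneg (Finset.sum_nonneg fun w _ => hnn u v w) (hq v).le
  have hff1 : A false false ≤ 1 := by have := hcol false; have := h0 true false; linarith
  have htt1 : A true true ≤ 1 := by have := hcol true; have := h0 false true; linarith
  have hft : A false true = 1 - A true true := by linarith [hcol true]
  have htf : A true false = 1 - A false false := by linarith [hcol false]
  have hc : ∀ u w, (∑ v : Bool, p u v w)
      = A u false * (∑ u' : Bool, p u' false w) + A u true * (∑ u' : Bool, p u' true w) := by
    intro u w
    rw [Fintype.sum_bool, hfac u false w, hfac u true w]
    ring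
  have key : det2 (fun u w => ∑ v : Bool, p u v w)
      = (A false false + A true true - 1) * det2 (fun v w => ∑ u : Bool, p u v w) := by
    simp only [det2, hc, hft, htf]
    ring
  have hfactor : |A false false + A true true - 1| ≤ 1 := by
    rw [abs_le]
    constructor
    · have := h0 false false; have := h0 true true; linarith
    · linarith
  constructor
  · rw [key, abs_mul]
    exact mul_le_of_le_one_left (abs_nonneg _) hfactor
  · rintro ⟨hbne, hnperm⟩
    have hflt : |A false false + A true true - 1| < 1 := by
      rcases lt_or_eq_of_le hfactor with h | h
      · exact h
      exfalso
      apply hnperm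
      rcases abs_eq (by norm_num : (0:ℝ) ≤ 1) |>.mp h with h1 | h1
      · -- A ff = 1 and A tt = 1 : identity
        have hα : A false false = 1 := by linarith
        have hβ : A true true = 1 := by linarith
        left
        have hall : ∀ u v : Bool, A u v = if u = v then 1 else 0 := by
          intro u v
          cases u <;> cases v <;> simp [hα, hβ, hft, htf]
        simp only [hA] at hall
        exact hall
      · -- A ff = 0 and A tt = 0 : swap
        have h0ff := h0 false false; have h0tt := h0 true true
        have hα : A false false = 0 := by linarith
        have hβ : A true true = 0 := by linarith
        right
        have hall : ∀ u v : Bool, A u v = if u = v then 0 else 1 := by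
          intro u v
          cases u <;> cases v <;> simp [hα, hβ, hft, htf]
        simp only [hA] at hall
        exact hall
    rw [key, abs_mul]
    exact mul_lt_of_lt_one_left (abs_pos.mpr hbne) hflt
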